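/- Let A be an n×n real matrix. The following are equivalent: (i) A is diagonally equivalent to a symmetric matrix; (ii) for every pair (D₁, D₂) of diagonal matrices with strictly positive diagonal entries, D₁ A D₂ is diagonally equivalent to a symmetric matrix; (iii) there exist diagonal matrices D₁, D₂ with strictly positive diagonal entries such that D₁ A D₂ is diagonally equivalent to a symmetric matrix. -/

import Mathlib

open Matrix

/-- `A` is diagonally equivalent to a symmetric matrix. -/
def IsDiagEquivSymm {n : ℕ} (A : Matrix (Fin n) (Fin n) ℝ) : Prop :=
  ∃ D : Matrix (Fin n) (Fin n) ℝ, D.IsDiag ∧ (∀ i, D i i ≠ 0) ∧ (D * A * D⁻¹).IsSymm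

lemma mul_entry_left {n : ℕ} {D A : Matrix (Fin n) (Fin n) ℝ} (h : D.IsDiag) (i j : Fin n) :
    (D * A) i j = D i i * A i j := by
  rw [Matrix.mul_apply, Finset.sum_eq_single i]
  · intro k _ hk
    rw [h (Ne.symm hk), zero_mul]
  · simp

lemma mul_entry_right {n : ℕ} {D A : Matrix (Fin n) (Fin n) ℝ} (h : D.IsDiag) (i j : Fin n) :
    (A * D) i j = A i j * D j j := by
  rw [Matrix.mul_apply, Finset.sum_eq_single j]
  · intro k _ hk
    rw [h hk, mul_zero]
  · simp

lemma isDiagEquivSymm_iff {n : ℕ} (A : Matrix (Fin n) (Fin n) ℝ) :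
    IsDiagEquivSymm A ↔ ∃ d : Fin n → ℝ, (∀ i, d i ≠ 0) ∧
      ∀ i j, d i ^ 2 * A i j = d j ^ 2 * A j i := by
  constructor
  · rintro ⟨D, hD, hne, hsymm⟩
    refine ⟨fun i => D i i, hne, fun i j => ?_⟩
    have hinv : D⁻¹ = diagonal (fun i => (D i i)⁻¹) := by
      apply Matrix.inv_eq_right_inv
      conv_lhs => rw [← hD.diagonal_diag]
      rw [Matrix.diagonal_mul_diagonal]
      ext i j
      by_cases hij : i = j
      · subst hij; simp [Matrix.diag, mul_inv_cancel₀ (hne i)]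
      · simp [Matrix.diagonal_apply_ne _ hij, Matrix.one_apply_ne hij]
    have h := hsymm.apply i j
    rw [hinv, mul_entry_right (Matrix.isDiag_diagonal _), mul_entry_right (Matrix.isDiag_diagonal _),
      mul_entry_left hD, mul_entry_left hD] at h
    simp only [Matrix.diagonal_apply_eq] at h
    have h1 := hne i
    have h2 := hne j
    field_simp at h
    linear_combination -h
  · rintro ⟨d, hd, hA⟩
    refine ⟨diagonal d, Matrix.isDiag_diagonal d, by simpa using hd, ?_⟩
    have hinv : (diagonal d)⁻¹ = diagonal (fun i => (d i)⁻¹) := by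
      apply Matrix.inv_eq_right_inv
      rw [Matrix.diagonal_mul_diagonal]
      ext i j
      by_cases hij : i = j
      · subst hij; simp [mul_inv_cancel₀ (hd i)]
      · simp [Matrix.diagonal_apply_ne _ hij, Matrix.one_apply_ne hij]
    rw [hinv, Matrix.IsSymm.ext_iff]
    intro i j
    rw [mul_entry_right (Matrix.isDiag_diagonal _), mul_entry_right (Matrix.isDiag_diagonal _),
      mul_entry_left (Matrix.isDiag_diagonal _), mul_entry_left (Matrix.isDiag_diagonal _)]
    simp only [Matrix.diagonal_apply_eq]
    have h1 := hd i
    have h2 := hd j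
    field_simp
    linear_combination -hA i j

lemma key_lemma {n : ℕ} (A D₁ D₂ : Matrix (Fin n) (Fin n) ℝ)
    (h₁ : D₁.IsDiag) (h₂ : D₂.IsDiag) (p₁ : ∀ i, 0 < D₁ i i) (p₂ : ∀ i, 0 < D₂ i i)
    (h : IsDiagEquivSymm A) : IsDiagEquivSymm (D₁ * A * D₂) := by
  rw [isDiagEquivSymm_iff] at h ⊢
  obtain ⟨d, hd, hA⟩ := h
  refine ⟨fun i => d i * Real.sqrt (D₂ i i / D₁ i i),
    fun i => mul_ne_zero (hd i) (Real.sqrt_ne_zero'.mpr (div_pos (p₂ i) (p₁ i))), fun i j => ?_⟩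
  have hB : ∀ i j, (D₁ * A * D₂) i j = D₁ i i * A i j * D₂ j j := by
    intro i j
    rw [mul_entry_right h₂, mul_entry_left h₁]
  have hsq : ∀ i, (d i * Real.sqrt (D₂ i i / D₁ i i)) ^ 2 = d i ^ 2 * (D₂ i i / D₁ i i) := by
    intro i
    rw [mul_pow, Real.sq_sqrt (le_of_lt (div_pos (p₂ i) (p₁ i)))]
  rw [hB i j, hB j i, hsq i, hsq j]
  have h1 := (p₁ i).ne'
  have h2 := (p₁ j).ne'
  field_simp
  linear_combination (D₂ i i * D₂ j j) * hA i j

/-- Symmetrizability by diagonal conjugation is stable under pre/post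
multiplication by positive diagonal matrices (Lemma 2.3). -/
theorem stmt_3 {n : ℕ} (A : Matrix (Fin n) (Fin n) ℝ) :
    (IsDiagEquivSymm A ↔
      ∀ D₁ D₂ : Matrix (Fin n) (Fin n) ℝ, D₁.IsDiag → D₂.IsDiag →
        (∀ i, 0 < D₁ i i) → (∀ i, 0 < D₂ i i) → IsDiagEquivSymm (D₁ * A * D₂)) ∧
    (IsDiagEquivSymm A ↔
      ∃ D₁ D₂ : Matrix (Fin n) (Fin n) ℝ, D₁.IsDiag ∧ D₂.IsDiag ∧
        (∀ i, 0 < D₁ i i) ∧ (∀ i, 0 < D₂ i i) ∧ IsDiagEquivSymm (D₁ * A * D₂)) := by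
  have one_diag : (1 : Matrix (Fin n) (Fin n) ℝ).IsDiag := Matrix.isDiag_one
  have one_pos : ∀ i, (0:ℝ) < (1 : Matrix (Fin n) (Fin n) ℝ) i i := by
    intro i; simp [Matrix.one_apply]
  constructor
  · constructor
    · intro h D₁ D₂ h₁ h₂ p₁ p₂
      exact key_lemma A D₁ D₂ h₁ h₂ p₁ p₂ h
    · intro h
      have := h 1 1 one_diag one_diag one_pos one_pos
      simpa using this
  · constructor
    · intro h
      refine ⟨1, 1, one_diag, one_diag, one_pos, one_pos, by simpa using h⟩
    · rintro ⟨D₁, D₂, h₁, h₂, p₁, p₂, h⟩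
      have hE₁ : (diagonal (fun i => (D₁ i i)⁻¹)).IsDiag := Matrix.isDiag_diagonal _
      have hE₂ : (diagonal (fun i => (D₂ i i)⁻¹)).IsDiag := Matrix.isDiag_diagonal _
      have key := key_lemma (D₁ * A * D₂) (diagonal (fun i => (D₁ i i)⁻¹))
        (diagonal (fun i => (D₂ i i)⁻¹)) hE₁ hE₂
        (fun i => by simpa using inv_pos.mpr (p₁ i))
        (fun i => by simpa using inv_pos.mpr (p₂ i)) h
      have e1 : diagonal (fun i => (D₁ i i)⁻¹) * D₁ = 1 := by
        ext i j
        rw [Matrix.diagonal_mul]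
        by_cases hij : i = j
        · subst hij; simp [inv_mul_cancel₀ (p₁ i).ne']
        · rw [h₁ hij, Matrix.one_apply_ne hij, mul_zero]
      have e2 : D₂ * diagonal (fun i => (D₂ i i)⁻¹) = 1 := by
        ext i j
        rw [Matrix.mul_diagonal]
        by_cases hij : i = j
        · subst hij; simp [mul_inv_cancel₀ (p₂ i).ne']
        · rw [h₂ hij, Matrix.one_apply_ne hij, zero_mul]
      have eq : diagonal (fun i => (D₁ i i)⁻¹) * (D₁ * A * D₂) * diagonal (fun i => (D₂ i i)⁻¹)
          = A := by
        calc diagonal (fun i => (D₁ i i)⁻¹) * (D₁ * A * D₂) * diagonal (fun i => (D₂ i i)⁻¹)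
            = (diagonal (fun i => (D₁ i i)⁻¹) * D₁) * A * (D₂ * diagonal (fun i => (D₂ i i)⁻¹)) := by
              simp only [Matrix.mul_assoc]
          _ = A := by rw [e1, e2, one_mul, mul_one]
      rwa [eq] at key
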